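/- arXiv:2207.01051 — 2 statements merged into one kernel-verified Lean document; each statement's English description precedes it below -/
import Mathlib

section
/- Let k ≥ 2 and let D be a k-dicritical digraph. Then there is no vertex v of D having exactly one neighbour that is not joined to v by a digon (that is, no vertex v such that all of its neighbours except exactly one are joined to v by digons). -/
/-!
Basic theory of finite digraphs: a digraph has a finite vertex set and a
finite set of arcs (ordered pairs of distinct vertices).
-/

/-- A finite digraph on a vertex type `V`: a finite vertex set together with a
finite set of arcs, each arc being an ordered pair of distinct vertices. -/
structure Digraph' (V : Type*) where
  verts : Finset V
  arcs : Finset (V × V)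
  wf : ∀ a ∈ arcs, a.1 ∈ verts ∧ a.2 ∈ verts ∧ a.1 ≠ a.2

namespace Digraph'

variable {V : Type*} [DecidableEq V]

/-- The number of vertices of a digraph. -/
def n (D : Digraph' V) : ℕ := D.verts.card

/-- The number of arcs of a digraph. -/
def m (D : Digraph' V) : ℕ := D.arcs.card

/-- The set of consecutive (cyclically) pairs of a list, i.e. the arcs of the
directed cycle running through the list. -/
def cyclicArcs (c : List V) : Finset (V × V) := (c.zip (c.rotate 1)).toFinset

/-- The set of consecutive pairs of a list, i.e. the arcs of the directed path
running through the list. -/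
def pathArcs (p : List V) : Finset (V × V) := (p.zip p.tail).toFinset

/-- The symmetric closure of a set of arcs. -/
def symArcs (s : Finset (V × V)) : Finset (V × V) := s ∪ s.image Prod.swap

/-- The arcs of the bidirected path running through a list (each consecutive
pair is joined by a digon). -/
def pathDigonArcs (p : List V) : Finset (V × V) := symArcs (pathArcs p)

/-- `p` is the list of vertices of a path of odd length (an odd number of edges,
equivalently an even number of vertices) from `a` to `b`. -/
def IsOddBidirPathList (p : List V) (a b : V) : Prop :=
  p.Nodup ∧ Even p.length ∧ p.head? = some a ∧ p.getLast? = some b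

/-- The subdigraph induced by `S` contains no directed cycle.  A directed cycle
is given by a nonempty list of at least two distinct vertices, each one having an
arc towards the (cyclically) next one. -/
def AcyclicOn (D : Digraph' V) (S : Finset V) : Prop :=
  ¬ ∃ c : List V, c.Nodup ∧ 2 ≤ c.length ∧ (∀ v ∈ c, v ∈ S) ∧ cyclicArcs c ⊆ D.arcs

/-- `φ` is a `k`-dicolouring of `D`: every colour class induces an acyclic
subdigraph. -/
def IsDicolouring (D : Digraph' V) (k : ℕ) (φ : V → Fin k) : Prop :=
  ∀ i : Fin k, D.AcyclicOn (D.verts.filter fun v => φ v = i)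

/-- `D` admits a `k`-dicolouring. -/
def Dicolourable (D : Digraph' V) (k : ℕ) : Prop :=
  ∃ φ : V → Fin k, D.IsDicolouring k φ

/-- The dichromatic number of `D`: the least `k` such that `D` is
`k`-dicolourable. -/
noncomputable def dichromatic (D : Digraph' V) : ℕ := sInf {k | D.Dicolourable k}

/-- `H` is a subdigraph of `D`. -/
def IsSubdigraph (H D : Digraph' V) : Prop := H.verts ⊆ D.verts ∧ H.arcs ⊆ D.arcs

/-- `H` is a proper subdigraph of `D`. -/
def IsProperSubdigraph (H D : Digraph' V) : Prop :=
  H.IsSubdigraph D ∧ (H.verts ≠ D.verts ∨ H.arcs ≠ D.arcs)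

/-- `D` is `k`-dicritical: its dichromatic number is `k` and every proper
subdigraph has dichromatic number at most `k - 1`. -/
def Dicritical (k : ℕ) (D : Digraph' V) : Prop :=
  D.dichromatic = k ∧
    ∀ H : Digraph' V, H.IsProperSubdigraph D → H.dichromatic ≤ k - 1

/-- `D` is an oriented graph: it has no digon. -/
def Oriented (D : Digraph' V) : Prop := ∀ a ∈ D.arcs, (a.2, a.1) ∉ D.arcs

/-- There is a digon between `u` and `v` in `D`. -/
def HasDigon (D : Digraph' V) (u v : V) : Prop :=
  (u, v) ∈ D.arcs ∧ (v, u) ∈ D.arcs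

/-- `u` and `v` are neighbours: there is at least one arc between them. -/
def UAdj (D : Digraph' V) (u v : V) : Prop :=
  (u, v) ∈ D.arcs ∨ (v, u) ∈ D.arcs

/-- `M` is a matching of digons of `D` (a matching of the digon graph `B(D)`):
a set of digons of `D`, pairwise sharing no end-vertex. -/
def IsDigonMatching (D : Digraph' V) (M : Finset (V × V)) : Prop :=
  (∀ p ∈ M, D.HasDigon p.1 p.2) ∧
    ∀ p ∈ M, ∀ q ∈ M, p ≠ q → p.1 ≠ q.1 ∧ p.1 ≠ q.2 ∧ p.2 ≠ q.1 ∧ p.2 ≠ q.2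

/-- `π(D)`: the maximum size of a matching of the digon graph `B(D)`. -/
noncomputable def piNum (D : Digraph' V) : ℕ :=
  sSup {k | ∃ M : Finset (V × V), D.IsDigonMatching M ∧ M.card = k}

/-- The potential `ρ(D) = 7 n(D) - 3 m(D) - 2 π(D)`. -/
noncomputable def potential (D : Digraph' V) : ℤ :=
  7 * (D.n : ℤ) - 3 * (D.m : ℤ) - 2 * (D.piNum : ℤ)

/-- The subdigraph of `D` induced by `R`. -/
def induce (D : Digraph' V) (R : Finset V) : Digraph' V where
  verts := D.verts ∩ R
  arcs := D.arcs.filter fun a => a.1 ∈ R ∧ a.2 ∈ R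
  wf := by
    intro a ha
    rw [Finset.mem_filter] at ha
    obtain ⟨h, h1, h2⟩ := ha
    obtain ⟨hv1, hv2, hne⟩ := D.wf a h
    exact ⟨Finset.mem_inter.mpr ⟨hv1, h1⟩, Finset.mem_inter.mpr ⟨hv2, h2⟩, hne⟩

/-- The potential `ρ_D(R)` of a set of vertices `R` in `D`: the potential of the
subdigraph of `D` induced by `R`. -/
noncomputable def potentialOn (D : Digraph' V) (R : Finset V) : ℤ :=
  (D.induce R).potential

/-- The digraph obtained from `D` by deleting the arc `a`. -/
def eraseArc (D : Digraph' V) (a : V × V) : Digraph' V where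
  verts := D.verts
  arcs := D.arcs.erase a
  wf := fun b hb => D.wf b (Finset.mem_of_mem_erase hb)

/-- The digraph obtained from `D` by deleting the vertex `v`. -/
def delVert (D : Digraph' V) (v : V) : Digraph' V where
  verts := D.verts.erase v
  arcs := D.arcs.filter fun a => a.1 ≠ v ∧ a.2 ≠ v
  wf := by
    intro a ha
    rw [Finset.mem_filter] at ha
    obtain ⟨h, h1, h2⟩ := ha
    obtain ⟨hv1, hv2, hne⟩ := D.wf a h
    exact ⟨Finset.mem_erase.mpr ⟨h1, hv1⟩, Finset.mem_erase.mpr ⟨h2, hv2⟩, hne⟩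

/-- The degree of `v` in `D`: the number of arcs incident to `v`. -/
def degree (D : Digraph' V) (v : V) : ℕ :=
  (D.arcs.filter fun a => a.1 = v ∨ a.2 = v).card

/-- `D` is a bidirected odd cycle: obtained from an undirected cycle of odd
length (at least 3) by replacing every edge by a digon. -/
def IsBidirectedOddCycle (D : Digraph' V) : Prop :=
  ∃ c : List V, c.Nodup ∧ 3 ≤ c.length ∧ Odd c.length ∧
    D.verts = c.toFinset ∧ D.arcs = symArcs (cyclicArcs c)

/-- `H` is a bidirected odd cycle with one arc removed. -/
def IsBidirOddCycleMinusArc (H : Digraph' V) : Prop :=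
  ∃ (C : Digraph' V) (e : V × V), C.IsBidirectedOddCycle ∧ e ∈ C.arcs ∧
    H.verts = C.verts ∧ H.arcs = C.arcs.erase e

/-- `D` is an odd 3-wheel with center `c`: a vertex `c` joined to a directed
3-cycle `(x, y, z, x)` by three bidirected paths of odd length, pairwise
disjoint except in `c`. -/
def IsOdd3WheelWithCenter (D : Digraph' V) (c : V) : Prop :=
  ∃ (p₁ p₂ p₃ : List V) (x y z : V),
    IsOddBidirPathList p₁ c x ∧ IsOddBidirPathList p₂ c y ∧ IsOddBidirPathList p₃ c z ∧
    p₁.toFinset ∩ p₂.toFinset = {c} ∧ p₁.toFinset ∩ p₃.toFinset = {c} ∧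
    p₂.toFinset ∩ p₃.toFinset = {c} ∧
    D.verts = p₁.toFinset ∪ p₂.toFinset ∪ p₃.toFinset ∧
    D.arcs = pathDigonArcs p₁ ∪ pathDigonArcs p₂ ∪ pathDigonArcs p₃ ∪
      {(x, y), (y, z), (z, x)}

/-- `D` is an odd 3-wheel. -/
def IsOdd3Wheel (D : Digraph' V) : Prop := ∃ c : V, D.IsOdd3WheelWithCenter c

end Digraph'

namespace Digraph'

variable {V : Type*} [DecidableEq V]

private lemma succ_mod_ne {n i : ℕ} (h2 : 2 ≤ n) (hi : i < n) : (i + 1) % n ≠ i := by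
  rcases Nat.lt_or_ge (i + 1) n with h | h
  · rw [Nat.mod_eq_of_lt h]; omega
  · have hin : i + 1 = n := by omega
    rw [hin, Nat.mod_self]; omega

lemma mem_of_mem_cyclicArcs {c : List V} {p : V × V} (h : p ∈ cyclicArcs c) :
    p.1 ∈ c ∧ p.2 ∈ c := by
  obtain ⟨a, b⟩ := p
  rw [cyclicArcs, List.mem_toFinset] at h
  obtain ⟨h1, h2⟩ := List.of_mem_zip h
  exact ⟨h1, List.mem_rotate.1 h2⟩

lemma getElem_pair_mem_cyclicArcs {l : List V} {i j : ℕ} (hi : i < l.length)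
    (hj : j < l.length) (hij : (i + 1) % l.length = j) :
    (l[i], l[j]) ∈ cyclicArcs l := by
  rw [cyclicArcs, List.mem_toFinset, List.mem_iff_getElem]
  have hlen : (l.zip (l.rotate 1)).length = l.length := by
    rw [List.length_zip, List.length_rotate]; omega
  refine ⟨i, by omega, ?_⟩
  rw [List.getElem_zip, List.getElem_rotate]
  simp only [hij]

lemma exists_prev_next {l : List V} (hnd : l.Nodup) (hlen : 2 ≤ l.length) {v : V}
    (hv : v ∈ l) :
    (∃ x ∈ l, x ≠ v ∧ (x, v) ∈ cyclicArcs l) ∧ ∃ y ∈ l, y ≠ v ∧ (v, y) ∈ cyclicArcs l := by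
  obtain ⟨j, hj, hjv⟩ := List.mem_iff_getElem.mp hv
  constructor
  · -- predecessor: index i = (j + (length - 1)) % length
    have hi : (j + (l.length - 1)) % l.length < l.length := Nat.mod_lt _ (by omega)
    have hij : ((j + (l.length - 1)) % l.length + 1) % l.length = j := by
      rw [Nat.mod_add_mod]
      have : j + (l.length - 1) + 1 = j + l.length := by omega
      rw [this, Nat.add_mod_right, Nat.mod_eq_of_lt hj]
    have hne : (j + (l.length - 1)) % l.length ≠ j := by
      intro e
      exact succ_mod_ne hlen hj (by rw [e] at hij; exact hij)
    refine ⟨l[(j + (l.length - 1)) % l.length], List.getElem_mem _, ?_, ?_⟩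
    · rw [← hjv]
      intro e
      exact hne ((hnd.getElem_inj_iff).mp e)
    · have := getElem_pair_mem_cyclicArcs hi hj hij
      rwa [hjv] at this
  · -- successor: index (j+1) % length
    have hj1 : (j + 1) % l.length < l.length := Nat.mod_lt _ (by omega)
    refine ⟨l[(j + 1) % l.length], List.getElem_mem _, ?_, ?_⟩
    · rw [← hjv]
      intro e
      exact succ_mod_ne hlen hj ((hnd.getElem_inj_iff).mp e)
    · have := getElem_pair_mem_cyclicArcs hj hj1 rfl
      rwa [hjv] at this

lemma dicolourable_mono {D : Digraph' V} {m k : ℕ} (h : D.Dicolourable m) (hmk : m ≤ k) :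
    D.Dicolourable k := by
  obtain ⟨φ, hφ⟩ := h
  refine ⟨fun v => Fin.castLE hmk (φ v), fun i hcon => ?_⟩
  obtain ⟨c, hnd, hlen, hmem, harcs⟩ := hcon
  have hc : c ≠ [] := by intro h; rw [h] at hlen; simp at hlen
  obtain ⟨z, hz⟩ := List.exists_mem_of_ne_nil c hc
  have hz' := hmem z hz
  rw [Finset.mem_filter] at hz'
  refine hφ (φ z) ⟨c, hnd, hlen, fun x hx => ?_, harcs⟩
  have hx' := hmem x hx
  rw [Finset.mem_filter] at hx' ⊢
  refine ⟨hx'.1, Fin.castLE_injective hmk (hx'.2.trans hz'.2.symm)⟩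

lemma isDicolouring_eraseArc {D : Digraph' V} {k : ℕ} {φ : V → Fin k}
    (h : D.IsDicolouring k φ) (a : V × V) : (D.eraseArc a).IsDicolouring k φ := by
  intro i hcon
  obtain ⟨c, h1, h2, h3, h4⟩ := hcon
  exact h i ⟨c, h1, h2, h3, fun b hb => Finset.mem_of_mem_erase (h4 hb)⟩

lemma crit_arc {k : ℕ} (hk : 2 ≤ k) {D : Digraph' V} (hcrit : Dicritical k D)
    {a : V × V} (ha : a ∈ D.arcs) :
    ∃ (φ : V → Fin (k - 1)) (i : Fin (k - 1)) (c : List V),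
      (D.eraseArc a).IsDicolouring (k - 1) φ ∧
      c.Nodup ∧ 2 ≤ c.length ∧ (∀ z ∈ c, z ∈ D.verts.filter fun z => φ z = i) ∧
      cyclicArcs c ⊆ D.arcs ∧ a ∈ cyclicArcs c := by
  obtain ⟨hchrom, hsub⟩ := hcrit
  -- D is k-dicolourable
  have hDne : {m | D.Dicolourable m}.Nonempty := by
    by_contra h
    rw [Set.not_nonempty_iff_eq_empty] at h
    rw [dichromatic, h, Nat.sInf_empty] at hchrom
    omega
  have hDk : D.Dicolourable k := by
    have := Nat.sInf_mem hDne
    rwa [← dichromatic, hchrom] at this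
  -- erased digraph
  have hprop : (D.eraseArc a).IsProperSubdigraph D := by
    refine ⟨⟨Finset.Subset.refl _, Finset.erase_subset _ _⟩, Or.inr ?_⟩
    intro h
    exact (Finset.erase_eq_self.mp h) ha
  have hEle : (D.eraseArc a).dichromatic ≤ k - 1 := hsub _ hprop
  have hEne : {m | (D.eraseArc a).Dicolourable m}.Nonempty := by
    obtain ⟨φ, hφ⟩ := hDk
    exact ⟨k, φ, isDicolouring_eraseArc hφ a⟩
  have hE : (D.eraseArc a).Dicolourable (k - 1) :=
    dicolourable_mono (Nat.sInf_mem hEne) hEle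
  obtain ⟨φ, hφ⟩ := hE
  -- φ is not a dicolouring of D
  have hnotD : ¬ D.IsDicolouring (k - 1) φ := by
    intro h
    have : D.dichromatic ≤ k - 1 := Nat.sInf_le ⟨φ, h⟩
    omega
  rw [IsDicolouring] at hnotD
  push_neg at hnotD
  obtain ⟨i, hi⟩ := hnotD
  rw [AcyclicOn, not_not] at hi
  obtain ⟨c, hnd, hlen, hmem, harcs⟩ := hi
  refine ⟨φ, i, c, hφ, hnd, hlen, hmem, harcs, ?_⟩
  -- some arc of c must be a
  by_contra hna
  refine hφ i ⟨c, hnd, hlen, hmem, fun b hb => ?_⟩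
  refine Finset.mem_erase.mpr ⟨fun e => hna (e ▸ hb), harcs hb⟩

lemma digon_cycle_contra {D : Digraph' V} {a : V × V} {k : ℕ} {φ : V → Fin k}
    (hφ : (D.eraseArc a).IsDicolouring k φ) {i : Fin k} {v x : V}
    (hvx : v ≠ x)
    (h1 : (v, x) ∈ D.arcs) (h2 : (x, v) ∈ D.arcs) (h1a : (v, x) ≠ a) (h2a : (x, v) ≠ a)
    (hvf : v ∈ D.verts.filter fun z => φ z = i)
    (hxf : x ∈ D.verts.filter fun z => φ z = i) : False := by
  refine hφ i ⟨[v, x], by simp [hvx], by simp, ?_, ?_⟩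
  · intro z hz
    rcases List.mem_pair.mp hz with rfl | rfl
    · exact hvf
    · exact hxf
  · intro b hb
    have hrot : [v, x].rotate 1 = [x, v] := by
      rw [List.rotate_cons_succ, List.rotate_zero]; rfl
    rw [cyclicArcs, hrot, List.mem_toFinset] at hb
    simp only [List.zip, List.zipWith, List.mem_cons, List.not_mem_nil, or_false] at hb
    rcases hb with rfl | rfl
    · exact Finset.mem_erase.mpr ⟨h1a, h1⟩
    · exact Finset.mem_erase.mpr ⟨h2a, h2⟩

end Digraph'

open Digraph' in
/-- If `k ≥ 2` and `D` is a `k`-dicritical digraph, then no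
vertex `v` of `D` has exactly one neighbour not joined to `v` by a digon. -/
theorem no_vertex_with_almost_only_digons {V : Type*} [DecidableEq V]
    (k : ℕ) (hk : 2 ≤ k) (D : Digraph' V) (hcrit : Digraph'.Dicritical k D) :
    ¬ ∃ v w : V, D.UAdj v w ∧ ¬ D.HasDigon v w ∧
      ∀ u : V, D.UAdj v u → u ≠ w → D.HasDigon v u := by
  rintro ⟨v, w, hadj, hnd, hdig⟩
  rcases hadj with h1 | h1
  · -- single arc is (v, w)
    have h2 : (w, v) ∉ D.arcs := fun h => hnd ⟨h1, h⟩
    obtain ⟨φ, i, C, hφ, hnod, hlen, hmem, hsub, hain⟩ := crit_arc hk hcrit h1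
    have hvC : v ∈ C := (mem_of_mem_cyclicArcs hain).1
    obtain ⟨⟨x, hxC, hxv, hxa⟩, -⟩ := exists_prev_next hnod hlen hvC
    have hxvarc : (x, v) ∈ D.arcs := hsub hxa
    have hxw : x ≠ w := fun e => h2 (e ▸ hxvarc)
    have hdg : D.HasDigon v x := hdig x (Or.inr hxvarc) hxw
    refine digon_cycle_contra hφ hxv.symm hdg.1 hdg.2 ?_ ?_ (hmem v hvC) (hmem x hxC)
    · intro e
      exact hxw (congrArg Prod.snd e)
    · intro e
      exact hxv (congrArg Prod.fst e)
  · -- single arc is (w, v)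
    have h2 : (v, w) ∉ D.arcs := fun h => hnd ⟨h, h1⟩
    obtain ⟨φ, i, C, hφ, hnod, hlen, hmem, hsub, hain⟩ := crit_arc hk hcrit h1
    have hvC : v ∈ C := (mem_of_mem_cyclicArcs hain).2
    obtain ⟨-, ⟨y, hyC, hyv, hya⟩⟩ := exists_prev_next hnod hlen hvC
    have hyvarc : (v, y) ∈ D.arcs := hsub hya
    have hyw : y ≠ w := fun e => h2 (e ▸ hyvarc)
    have hdg : D.HasDigon v y := hdig y (Or.inl hyvarc) hyw
    refine digon_cycle_contra hφ hyv.symm hdg.1 hdg.2 ?_ ?_ (hmem v hvC) (hmem y hyC)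
    · intro e
      exact hyv (congrArg Prod.snd e)
    · intro e
      exact hyw (congrArg Prod.fst e)
end

section
/- (i) Every purse H satisfies ρ(H) = 3. (ii) Every 3-dicritical digraph D that contains a spanning purse as a subdigraph satisfies ρ(D) ≤ −3. -/
open Digraph' in
/-- `D` is a purse: obtained from the oriented graph on `{x, y, z, y₁, y₂}` with
arcs `xy, zy, yy₁, yy₂, y₁x, y₁z, y₂x, y₂z` by adding a bidirected path of odd
length between `y₁` and `y₂` whose vertices are disjoint from `{x, y, z}`. -/
def Digraph'.IsPurse {V : Type*} [DecidableEq V] (D : Digraph' V) : Prop :=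
  ∃ (x y z y₁ y₂ : V) (p : List V),
    IsOddBidirPathList p y₁ y₂ ∧
    x ≠ y ∧ x ≠ z ∧ y ≠ z ∧
    x ∉ p ∧ y ∉ p ∧ z ∉ p ∧
    D.verts = {x, y, z} ∪ p.toFinset ∧
    D.arcs = pathDigonArcs p ∪
      {(x, y), (z, y), (y, y₁), (y, y₂), (y₁, x), (y₁, z), (y₂, x), (y₂, z)}

section PurseAux

open Digraph'

variable {V : Type*} [DecidableEq V]

/-! ### List lemmas -/

lemma mem_zip_tail_iff {p : List V} {a b : V} :
    (a, b) ∈ p.zip p.tail ↔ ∃ i, ∃ _ : i + 1 < p.length, p[i] = a ∧ p[i + 1] = b := by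
  have hlen : (p.zip p.tail).length = p.length - 1 := by
    simp [List.length_zip]
  constructor
  · intro h
    rw [List.mem_iff_getElem] at h
    obtain ⟨i, hi, he⟩ := h
    have hi' : i + 1 < p.length := by omega
    refine ⟨i, hi', ?_⟩
    rw [List.getElem_zip] at he
    rw [List.getElem_tail] at he
    exact ⟨congrArg Prod.fst he, congrArg Prod.snd he⟩
  · rintro ⟨i, hi, h1, h2⟩
    rw [List.mem_iff_getElem]
    refine ⟨i, by omega, ?_⟩
    rw [List.getElem_zip, List.getElem_tail]
    exact Prod.ext h1 h2

lemma pathArcs_ends {p : List V} {a b : V} (h : (a, b) ∈ pathArcs p) :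
    a ∈ p ∧ b ∈ p := by
  unfold pathArcs at h
  rw [List.mem_toFinset] at h
  have := List.of_mem_zip h
  exact ⟨this.1, List.mem_of_mem_tail this.2⟩

lemma pathArcs_swap_not_mem {p : List V} (hnd : p.Nodup) {a b : V}
    (h : (a, b) ∈ pathArcs p) : (b, a) ∉ pathArcs p := by
  intro h'
  unfold pathArcs at h h'
  rw [List.mem_toFinset, mem_zip_tail_iff] at h h'
  obtain ⟨i, hi, hi1, hi2⟩ := h
  obtain ⟨j, hj, hj1, hj2⟩ := h'
  have e1 : i = j + 1 := by
    have : p[i] = p[j + 1] := by rw [hi1, hj2]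
    exact (hnd.getElem_inj_iff).mp this
  have e2 : i + 1 = j := by
    have : p[i + 1] = p[j] := by rw [hi2, hj1]
    exact (hnd.getElem_inj_iff).mp this
  omega

lemma pathArcs_card {p : List V} (hnd : p.Nodup) :
    (pathArcs p).card = p.length - 1 := by
  have hzn : (p.zip p.tail).Nodup := by
    apply List.Nodup.of_map Prod.snd
    rw [List.map_snd_zip (by simp [List.length_tail])]
    exact hnd.tail
  unfold pathArcs
  rw [List.toFinset_card_of_nodup hzn, List.length_zip]
  simp

lemma pathArcs_swap_disjoint {p : List V} (hnd : p.Nodup) :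
    Disjoint (pathArcs p) ((pathArcs p).image Prod.swap) := by
  rw [Finset.disjoint_left]
  rintro ⟨a, b⟩ h h'
  rw [Finset.mem_image] at h'
  obtain ⟨q, hq, hswap⟩ := h'
  have : q = (b, a) := by
    have := congrArg Prod.swap hswap
    simpa using this
  subst this
  exact pathArcs_swap_not_mem hnd h hq

lemma pathDigonArcs_card {p : List V} (hnd : p.Nodup) :
    (pathDigonArcs p).card = 2 * (p.length - 1) := by
  unfold pathDigonArcs symArcs
  rw [Finset.card_union_of_disjoint (pathArcs_swap_disjoint hnd),
    Finset.card_image_of_injective _ Prod.swap_injective, pathArcs_card hnd]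
  omega

lemma pathDigonArcs_ends {p : List V} {a : V × V} (h : a ∈ pathDigonArcs p) :
    a.1 ∈ p ∧ a.2 ∈ p := by
  unfold pathDigonArcs symArcs at h
  rw [Finset.mem_union] at h
  rcases h with h | h
  · obtain ⟨h1, h2⟩ := pathArcs_ends (a := a.1) (b := a.2) (by simpa using h)
    exact ⟨h1, h2⟩
  · rw [Finset.mem_image] at h
    obtain ⟨q, hq, hswap⟩ := h
    obtain ⟨h1, h2⟩ := pathArcs_ends (a := q.1) (b := q.2) (by simpa using hq)
    subst hswap
    exact ⟨h2, h1⟩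

/-! ### pairing up a list -/

def pairup : List V → List (V × V)
  | [] => []
  | [_] => []
  | a :: b :: r => (a, b) :: pairup r

lemma pairup_flatMap : ∀ (l : List V), Even l.length →
    (pairup l).flatMap (fun q => [q.1, q.2]) = l
  | [], _ => rfl
  | [_], h => by simp [Nat.even_iff] at h
  | a :: b :: r, h => by
    have hr : Even r.length := by
      simp only [List.length_cons, Nat.even_iff] at h ⊢
      omega
    simp [pairup, pairup_flatMap r hr]

lemma pairup_length : ∀ (l : List V), (pairup l).length = l.length / 2
  | [] => by simp [pairup]
  | [_] => by simp [pairup]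
  | a :: b :: r => by
    simp only [pairup, List.length_cons, pairup_length r]
    omega

lemma zip_tail_subset (b : V) (l : List V) : l.zip l.tail ⊆ (b :: l).zip l := by
  cases l with
  | nil => simp
  | cons c r =>
    simp only [List.tail_cons, List.zip_cons_cons]
    exact List.subset_cons_self _ _

lemma mem_pairup_zip : ∀ (l : List V) (q : V × V), q ∈ pairup l → q ∈ l.zip l.tail
  | [], q, h => by simp [pairup] at h
  | [_], q, h => by simp [pairup] at h
  | a :: b :: r, q, h => by
    simp only [pairup, List.mem_cons] at h
    rcases h with h | h
    · subst h
      simp [List.zip_cons_cons]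
    · have h1 := mem_pairup_zip r q h
      have h2 : q ∈ (b :: r).zip r := zip_tail_subset b r h1
      simp only [List.tail_cons, List.zip_cons_cons]
      exact List.mem_cons_of_mem _ h2

/-! ### `S8`, the oriented arcs of a purse -/

def S8 (x y z y₁ y₂ : V) : Finset (V × V) :=
  {(x, y), (z, y), (y, y₁), (y, y₂), (y₁, x), (y₁, z), (y₂, x), (y₂, z)}

section S8

variable {x y z y₁ y₂ : V} {p : List V}
variable (hxy : x ≠ y) (hxz : x ≠ z) (hyz : y ≠ z)
variable (hxp : x ∉ p) (hyp : y ∉ p) (hzp : z ∉ p)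
variable (h1p : y₁ ∈ p) (h2p : y₂ ∈ p) (h12 : y₁ ≠ y₂) (hnd : p.Nodup)

include hxy hxz hyz hxp hyp hzp h1p h2p h12 in
lemma s8_no_digon {u v : V} (hu : (u, v) ∈ S8 x y z y₁ y₂)
    (hv : (v, u) ∈ S8 x y z y₁ y₂) : False := by
  have d1 : x ≠ y₁ := fun e => hxp (e ▸ h1p)
  have d2 : x ≠ y₂ := fun e => hxp (e ▸ h2p)
  have d3 : y ≠ y₁ := fun e => hyp (e ▸ h1p)
  have d4 : y ≠ y₂ := fun e => hyp (e ▸ h2p)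
  have d5 : z ≠ y₁ := fun e => hzp (e ▸ h1p)
  have d6 : z ≠ y₂ := fun e => hzp (e ▸ h2p)
  have := hxy.symm; have := hxz.symm; have := hyz.symm
  have := d1.symm; have := d2.symm; have := d3.symm
  have := d4.symm; have := d5.symm; have := d6.symm
  have := h12.symm
  simp only [S8, Finset.mem_insert, Finset.mem_singleton, Prod.mk.injEq] at hu hv
  rcases hu with ⟨rfl, rfl⟩ | ⟨rfl, rfl⟩ | ⟨rfl, rfl⟩ | ⟨rfl, rfl⟩ |
    ⟨rfl, rfl⟩ | ⟨rfl, rfl⟩ | ⟨rfl, rfl⟩ | ⟨rfl, rfl⟩ <;> simp_all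

include hxy hxz hyz hxp hyp hzp h1p h2p h12 in
lemma s8_card : (S8 x y z y₁ y₂).card = 8 := by
  have d1 : x ≠ y₁ := fun e => hxp (e ▸ h1p)
  have d2 : x ≠ y₂ := fun e => hxp (e ▸ h2p)
  have d3 : y ≠ y₁ := fun e => hyp (e ▸ h1p)
  have d4 : y ≠ y₂ := fun e => hyp (e ▸ h2p)
  have d5 : z ≠ y₁ := fun e => hzp (e ▸ h1p)
  have d6 : z ≠ y₂ := fun e => hzp (e ▸ h2p)
  have e : (S8 x y z y₁ y₂) =
      [(x, y), (z, y), (y, y₁), (y, y₂), (y₁, x), (y₁, z), (y₂, x), (y₂, z)].toFinset := by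
    simp [S8]
  rw [e, List.toFinset_card_of_nodup]
  · rfl
  · simp only [List.nodup_cons, List.mem_cons, List.not_mem_nil, or_false,
      List.mem_singleton, Prod.mk.injEq, List.nodup_nil, and_true, not_or]
    refine ⟨?_, ?_, ?_, ?_, ?_, ?_, ?_⟩ <;> tauto

include hxp in
lemma purse_out_x {w : V} (h : (x, w) ∈ pathDigonArcs p ∪ S8 x y z y₁ y₂)
    (hxy : x ≠ y) (hxz : x ≠ z) (h1p : y₁ ∈ p) (h2p : y₂ ∈ p) : w = y := by
  rcases Finset.mem_union.mp h with h | h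
  · exact absurd (pathDigonArcs_ends h).1 hxp
  · have d1 : x ≠ y₁ := fun e => hxp (e ▸ h1p)
    have d2 : x ≠ y₂ := fun e => hxp (e ▸ h2p)
    have := hxz.symm; have := d1.symm; have := d2.symm
    simp only [S8, Finset.mem_insert, Finset.mem_singleton, Prod.mk.injEq] at h
    simp_all

include hzp in
lemma purse_out_z {w : V} (h : (z, w) ∈ pathDigonArcs p ∪ S8 x y z y₁ y₂)
    (hxz : x ≠ z) (hyz : y ≠ z) (h1p : y₁ ∈ p) (h2p : y₂ ∈ p) : w = y := by
  rcases Finset.mem_union.mp h with h | h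
  · exact absurd (pathDigonArcs_ends h).1 hzp
  · have d5 : z ≠ y₁ := fun e => hzp (e ▸ h1p)
    have d6 : z ≠ y₂ := fun e => hzp (e ▸ h2p)
    have := hxz; have := hxz.symm; have := hyz.symm; have := d5.symm; have := d6.symm
    simp only [S8, Finset.mem_insert, Finset.mem_singleton, Prod.mk.injEq] at h
    simp_all

include hxy hxz hyz hxp hyp hzp hnd in
lemma purse_verts_card : ({x, y, z} ∪ p.toFinset : Finset V).card = p.length + 3 := by
  have hnd3 : ({x, y, z} : Finset V).card = 3 := by
    rw [Finset.card_insert_of_notMem (by simp [hxy, hxz]),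
      Finset.card_insert_of_notMem (by simp [hyz]), Finset.card_singleton]
  have hdisj : Disjoint ({x, y, z} : Finset V) p.toFinset := by
    rw [Finset.disjoint_left]
    intro a ha ha'
    rw [List.mem_toFinset] at ha'
    simp only [Finset.mem_insert, Finset.mem_singleton] at ha
    rcases ha with rfl | rfl | rfl
    · exact hxp ha'
    · exact hyp ha'
    · exact hzp ha'
  rw [Finset.card_union_of_disjoint hdisj, hnd3, List.toFinset_card_of_nodup hnd]
  omega

include hxy hxz hyz hxp hyp hzp h1p h2p h12 hnd in
lemma purse_arcs_card (hlen : 2 ≤ p.length) :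
    (pathDigonArcs p ∪ S8 x y z y₁ y₂).card = 2 * p.length + 6 := by
  have hdisj : Disjoint (pathDigonArcs p) (S8 x y z y₁ y₂) := by
    rw [Finset.disjoint_left]
    intro a ha ha'
    obtain ⟨he1, he2⟩ := pathDigonArcs_ends ha
    simp only [S8, Finset.mem_insert, Finset.mem_singleton] at ha'
    rcases ha' with rfl | rfl | rfl | rfl | rfl | rfl | rfl | rfl <;>
      simp_all
  rw [Finset.card_union_of_disjoint hdisj, pathDigonArcs_card hnd,
    s8_card hxy hxz hyz hxp hyp hzp h1p h2p h12]
  omega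

include hxy hxz hyz hxp hyp hzp h1p h2p h12 in
lemma purse_digon_ends {u v : V}
    (hu : (u, v) ∈ pathDigonArcs p ∪ S8 x y z y₁ y₂)
    (hv : (v, u) ∈ pathDigonArcs p ∪ S8 x y z y₁ y₂) : u ∈ p ∧ v ∈ p := by
  rcases Finset.mem_union.mp hu with h | h
  · exact pathDigonArcs_ends h
  · rcases Finset.mem_union.mp hv with h' | h'
    · obtain ⟨h1, h2⟩ := pathDigonArcs_ends h'
      exact ⟨h2, h1⟩
    · exact absurd (s8_no_digon hxy hxz hyz hxp hyp hzp h1p h2p h12 h h')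
        not_false

include hxy hxz hyz hxp hyp hzp h1p h2p h12 hnd in
lemma purse_matching_le (H : Digraph' V)
    (harcs : H.arcs = pathDigonArcs p ∪ S8 x y z y₁ y₂)
    (M : Finset (V × V)) (hM : H.IsDigonMatching M) : 2 * M.card ≤ p.length := by
  have hends : ∀ q ∈ M, q.1 ∈ p ∧ q.2 ∈ p ∧ q.1 ≠ q.2 := by
    intro q hq
    have hd := hM.1 q hq
    have hne := (H.wf _ hd.1).2.2
    have := purse_digon_ends hxy hxz hyz hxp hyp hzp h1p h2p h12
      (harcs ▸ hd.1) (harcs ▸ hd.2)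
    exact ⟨this.1, this.2, hne⟩
  classical
  set E := M.biUnion (fun q => ({q.1, q.2} : Finset V)) with hE
  have hdisj : ∀ q ∈ M, ∀ q' ∈ M, q ≠ q' →
      Disjoint ({q.1, q.2} : Finset V) ({q'.1, q'.2} : Finset V) := by
    intro q hq q' hq' hne
    obtain ⟨d1, d2, d3, d4⟩ := hM.2 q hq q' hq' hne
    rw [Finset.disjoint_left]
    intro a ha ha'
    simp only [Finset.mem_insert, Finset.mem_singleton] at ha ha'
    rcases ha with rfl | rfl <;> rcases ha' with h | h
    · exact d1 h
    · exact d2 h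
    · exact d3 h
    · exact d4 h
  have hcard : E.card = 2 * M.card := by
    rw [hE, Finset.card_biUnion hdisj]
    rw [Finset.sum_congr rfl (fun q hq => Finset.card_pair (hends q hq).2.2)]
    rw [Finset.sum_const, smul_eq_mul, mul_comm]
  have hsub : E ⊆ p.toFinset := by
    intro a ha
    rw [hE, Finset.mem_biUnion] at ha
    obtain ⟨q, hq, ha⟩ := ha
    simp only [Finset.mem_insert, Finset.mem_singleton] at ha
    rw [List.mem_toFinset]
    rcases ha with rfl | rfl
    · exact (hends q hq).1
    · exact (hends q hq).2.1
  have := Finset.card_le_card hsub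
  rw [hcard, List.toFinset_card_of_nodup hnd] at this
  exact this

include hxy hxz hyz hxp hyp hzp h1p h2p h12 hnd in
lemma purse_piNum (H : Digraph' V)
    (harcs : H.arcs = pathDigonArcs p ∪ S8 x y z y₁ y₂)
    (heven : Even p.length) : H.piNum = p.length / 2 := by
  classical
  -- the canonical matching
  have hflat : (pairup p).flatMap (fun q => [q.1, q.2]) = p := pairup_flatMap p heven
  have hbnd : ((pairup p).flatMap (fun q => [q.1, q.2])).Nodup := by rw [hflat]; exact hnd
  rw [List.nodup_flatMap] at hbnd
  obtain ⟨hpieces, hpw⟩ := hbnd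
  have hpnodup : (pairup p).Nodup := by
    refine List.Pairwise.imp ?_ hpw
    intro a b hab e
    subst e
    exact hab (by simp : a.1 ∈ [a.1, a.2]) (by simp)
  have hsymm : Symmetric (Function.onFun List.Disjoint fun q : V × V => [q.1, q.2]) :=
    fun a b h => List.Disjoint.symm h
  set M₀ : Finset (V × V) := (pairup p).toFinset with hM₀
  have hM₀mem : ∀ q ∈ M₀, q ∈ pairup p := fun q hq => List.mem_toFinset.mp hq
  have hmatch : H.IsDigonMatching M₀ := by
    constructor
    · intro q hq
      have hz : (q.1, q.2) ∈ p.zip p.tail := by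
        have := mem_pairup_zip p q (hM₀mem q hq)
        rwa [← Prod.mk.eta (p := q)] at this
      have hpa : (q.1, q.2) ∈ pathArcs p := by
        unfold pathArcs; rw [List.mem_toFinset]; exact hz
      constructor
      · rw [harcs]
        exact Finset.mem_union_left _ (Finset.mem_union_left _ hpa)
      · rw [harcs]
        refine Finset.mem_union_left _ (Finset.mem_union_right _ ?_)
        rw [Finset.mem_image]
        exact ⟨(q.1, q.2), hpa, rfl⟩
    · intro q hq q' hq' hne
      have hdisj := (haveI : Std.Symm (Function.onFun List.Disjoint fun q : V × V => [q.1, q.2]) := ⟨fun a b h => hsymm h⟩; hpw.forall (hM₀mem q hq) (hM₀mem q' hq') hne)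
      refine ⟨fun e => hdisj (a := q.1) (by simp) (by simp [e]),
        fun e => hdisj (a := q.1) (by simp) (by simp [e]),
        fun e => hdisj (a := q.2) (by simp) (by simp [e]),
        fun e => hdisj (a := q.2) (by simp) (by simp [e])⟩
  have hM₀card : M₀.card = p.length / 2 := by
    rw [hM₀, List.toFinset_card_of_nodup hpnodup, pairup_length]
  have hub : ∀ k ∈ {k | ∃ M : Finset (V × V), H.IsDigonMatching M ∧ M.card = k},
      k ≤ p.length / 2 := by
    rintro k ⟨M, hM, rfl⟩
    have := purse_matching_le hxy hxz hyz hxp hyp hzp h1p h2p h12 hnd H harcs M hM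
    omega
  unfold piNum
  apply le_antisymm
  · exact csSup_le ⟨M₀.card, M₀, hmatch, rfl⟩ hub
  · exact le_csSup ⟨p.length / 2, hub⟩ ⟨M₀, hmatch, hM₀card⟩

end S8

/-! ### general digraph lemmas -/

lemma digonMatching_empty (D : Digraph' V) : D.IsDigonMatching ∅ := by
  constructor <;> simp

lemma piNum_bddAbove (D : Digraph' V) :
    BddAbove {k | ∃ M : Finset (V × V), D.IsDigonMatching M ∧ M.card = k} := by
  refine ⟨D.arcs.card, ?_⟩
  rintro k ⟨M, hM, rfl⟩
  refine Finset.card_le_card ?_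
  intro q hq
  have := (hM.1 q hq).1
  rwa [Prod.mk.eta] at this

lemma piNum_mono {H D : Digraph' V} (h : H.IsSubdigraph D) : H.piNum ≤ D.piNum := by
  unfold piNum
  refine csSup_le ⟨0, ∅, digonMatching_empty H, rfl⟩ ?_
  rintro k ⟨M, hM, rfl⟩
  refine le_csSup (piNum_bddAbove D) ⟨M, ⟨?_, hM.2⟩, rfl⟩
  intro q hq
  exact ⟨h.2 (hM.1 q hq).1, h.2 (hM.1 q hq).2⟩

lemma acyclicOn_mono {D : Digraph' V} {S T : Finset V} (hST : S ⊆ T)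
    (h : D.AcyclicOn T) : D.AcyclicOn S := by
  rintro ⟨c, h1, h2, h3, h4⟩
  exact h ⟨c, h1, h2, fun v hv => hST (h3 v hv), h4⟩

lemma dicolourable_mono {D : Digraph' V} {k k' : ℕ} (hk : k ≤ k')
    (h : D.Dicolourable k) : D.Dicolourable k' := by
  obtain ⟨φ, hφ⟩ := h
  refine ⟨fun v => Fin.castLE hk (φ v), fun i => ?_⟩
  by_cases hex : ∃ j : Fin k, Fin.castLE hk j = i
  · obtain ⟨j, rfl⟩ := hex
    refine acyclicOn_mono ?_ (hφ j)
    intro v hv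
    rw [Finset.mem_filter] at hv ⊢
    refine ⟨hv.1, ?_⟩
    exact Fin.castLE_injective hk hv.2
  · rintro ⟨c, hnd, hlen, hmem, harcs⟩
    have hpos : 0 < c.length := by omega
    obtain ⟨v, hv⟩ := List.exists_mem_of_length_pos hpos
    have := (Finset.mem_filter.mp (hmem v hv)).2
    exact hex ⟨φ v, this⟩

lemma dicolourable_card_succ (D : Digraph' V) : D.Dicolourable (D.verts.card + 1) := by
  classical
  refine ⟨fun v => if h : v ∈ D.verts then (D.verts.equivFin ⟨v, h⟩).castSucc
    else Fin.last _, fun i => ?_⟩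
  rintro ⟨c, hnd, hlen, hmem, harcs⟩
  match c, hnd, hlen, hmem with
  | a :: b :: r, hnd, _, hmem =>
    have hab : a ≠ b := by
      have := hnd
      rw [List.nodup_cons] at this
      exact fun e => this.1 (e ▸ (List.mem_cons_self : b ∈ b :: r))
    have hma := Finset.mem_filter.mp (hmem a List.mem_cons_self)
    have hmb := Finset.mem_filter.mp (hmem b (List.mem_cons_of_mem _ List.mem_cons_self))
    have ea : (D.verts.equivFin ⟨a, hma.1⟩).castSucc = i := by
      have := hma.2; simp only at this; rwa [dif_pos hma.1] at this
    have eb : (D.verts.equivFin ⟨b, hmb.1⟩).castSucc = i := by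
      have := hmb.2; simp only at this; rwa [dif_pos hmb.1] at this
    have : (D.verts.equivFin ⟨a, hma.1⟩).castSucc = (D.verts.equivFin ⟨b, hmb.1⟩).castSucc := by
      rw [ea, eb]
    have := D.verts.equivFin.injective (Fin.castSucc_injective _ this)
    exact hab (congrArg Subtype.val this)

lemma dicolourable_of_dichromatic_le {D : Digraph' V} {j : ℕ}
    (h : D.dichromatic ≤ j) : D.Dicolourable j := by
  have hne : {k | D.Dicolourable k}.Nonempty := ⟨_, dicolourable_card_succ D⟩
  have hmem := Nat.sInf_mem hne
  exact dicolourable_mono h hmem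

lemma cyclicArcs_mem_ends {c : List V} {a : V × V} (h : a ∈ cyclicArcs c) :
    a.1 ∈ c ∧ a.2 ∈ c := by
  unfold cyclicArcs at h
  rw [List.mem_toFinset] at h
  have h' : (a.1, a.2) ∈ c.zip (c.rotate 1) := by rwa [Prod.mk.eta]
  have := List.of_mem_zip h'
  exact ⟨this.1, List.mem_rotate.mp this.2⟩

lemma exists_cyclic_succ {c : List V} (hlen : 1 ≤ c.length) {v : V} (hv : v ∈ c) :
    ∃ w ∈ c, (v, w) ∈ cyclicArcs c := by
  rw [List.mem_iff_getElem] at hv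
  obtain ⟨i, hi, rfl⟩ := hv
  have hzl : (c.zip (c.rotate 1)).length = c.length := by
    simp [List.length_zip]
  have hmod : (i + 1) % c.length < c.length := Nat.mod_lt _ (by omega)
  refine ⟨_, List.getElem_mem hmod, ?_⟩
  unfold cyclicArcs
  rw [List.mem_toFinset, List.mem_iff_getElem]
  refine ⟨i, by omega, ?_⟩
  rw [List.getElem_zip, List.getElem_rotate]

lemma extend_colouring {D : Digraph' V} {x y : V}
    (hdel : (D.delVert x).Dicolourable 2)
    (hout : ∀ w, (x, w) ∈ D.arcs → w = y) : D.Dicolourable 2 := by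
  classical
  obtain ⟨φ, hφ⟩ := hdel
  refine ⟨fun v => if v = x then φ y + 1 else φ v, fun i => ?_⟩
  rintro ⟨c, hnd, hlen, hmem, harcs⟩
  by_cases hxc : x ∈ c
  · obtain ⟨w, hwc, hvw⟩ := exists_cyclic_succ (by omega) hxc
    have hwD : (x, w) ∈ D.arcs := harcs hvw
    have hwy : w = y := hout w hwD
    have hxw : x ≠ w := (D.wf _ hwD).2.2
    have h1 := (Finset.mem_filter.mp (hmem x hxc)).2
    have h2 := (Finset.mem_filter.mp (hmem w hwc)).2
    have h1' : φ y + 1 = i := by simpa using h1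
    have h2' : φ w = i := by simpa [Ne.symm hxw] using h2
    rw [hwy] at h2'
    have heq : φ y + 1 = φ y := h1'.trans h2'.symm
    have hno : ∀ a : Fin 2, a + 1 ≠ a := by decide
    exact hno _ heq
  · refine hφ i ⟨c, hnd, hlen, ?_, ?_⟩
    · intro v hv
      have hm := Finset.mem_filter.mp (hmem v hv)
      have hvx : v ≠ x := fun e => hxc (e ▸ hv)
      rw [Finset.mem_filter]
      constructor
      · show v ∈ D.verts.erase x
        exact Finset.mem_erase.mpr ⟨hvx, hm.1⟩
      · have := hm.2
        simpa [hvx] using this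
    · intro a ha
      have haD := harcs ha
      obtain ⟨h1, h2⟩ := cyclicArcs_mem_ends ha
      show a ∈ D.arcs.filter fun b => b.1 ≠ x ∧ b.2 ≠ x
      rw [Finset.mem_filter]
      exact ⟨haD, fun e => hxc (e ▸ h1), fun e => hxc (e ▸ h2)⟩

end PurseAux


open Digraph' in
/-- (i) Every purse has potential 3. (ii) Every 3-dicritical
digraph having a spanning purse as a subdigraph has potential at most `-3`. -/
theorem purse_potential {V : Type*} [DecidableEq V] :
    (∀ H : Digraph' V, H.IsPurse → H.potential = 3) ∧
    (∀ D : Digraph' V, Digraph'.Dicritical 3 D →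
      (∃ H : Digraph' V, H.IsSubdigraph D ∧ H.IsPurse ∧ H.verts = D.verts) →
      D.potential ≤ -3) := by
  have fact : ∀ H : Digraph' V, H.IsPurse →
      ∃ (x y z y₁ y₂ : V) (p : List V),
        x ≠ y ∧ x ≠ z ∧ y ≠ z ∧ x ∉ p ∧ y ∉ p ∧ z ∉ p ∧ p.Nodup ∧ 2 ≤ p.length ∧
        Even p.length ∧ y₁ ∈ p ∧ y₂ ∈ p ∧
        H.verts = {x, y, z} ∪ p.toFinset ∧
        H.arcs = pathDigonArcs p ∪ S8 x y z y₁ y₂ ∧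
        H.n = p.length + 3 ∧ H.m = 2 * p.length + 6 ∧ H.piNum = p.length / 2 := by
    rintro H ⟨x, y, z, y₁, y₂, p, hp, hxy, hxz, hyz, hxp, hyp, hzp, hverts, harcs⟩
    obtain ⟨hnd, heven, hhead, hlast⟩ := hp
    have hpne : p ≠ [] := by
      intro e; rw [e] at hhead; simp at hhead
    have hlen1 : 1 ≤ p.length := List.length_pos_iff.mpr hpne
    have hlen2 : 2 ≤ p.length := by
      obtain ⟨t, ht⟩ := heven; omega
    have h1p : y₁ ∈ p := List.mem_of_mem_head? (Option.mem_def.mpr hhead)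
    have h2p : y₂ ∈ p := List.mem_of_mem_getLast? (Option.mem_def.mpr hlast)
    have hhead0 : ∃ h : 0 < p.length, p[0] = y₁ := by
      rw [← List.getElem?_eq_some_iff, ← List.head?_eq_getElem?]; exact hhead
    have hlastL : ∃ h : p.length - 1 < p.length, p[p.length - 1] = y₂ := by
      rw [← List.getElem?_eq_some_iff, ← List.getLast?_eq_getElem?]; exact hlast
    obtain ⟨hpos0, he0⟩ := hhead0
    obtain ⟨hposL, heL⟩ := hlastL
    have h12 : y₁ ≠ y₂ := by
      intro e
      have : p[0] = p[p.length - 1] := by rw [he0, heL, e]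
      have := (hnd.getElem_inj_iff).mp this
      omega
    have harcs' : H.arcs = pathDigonArcs p ∪ S8 x y z y₁ y₂ := harcs
    refine ⟨x, y, z, y₁, y₂, p, hxy, hxz, hyz, hxp, hyp, hzp, hnd, hlen2, heven,
      h1p, h2p, hverts, harcs', ?_, ?_, ?_⟩
    · rw [Digraph'.n, hverts, purse_verts_card hxy hxz hyz hxp hyp hzp hnd]
    · rw [Digraph'.m, harcs']
      exact purse_arcs_card hxy hxz hyz hxp hyp hzp h1p h2p h12 hnd hlen2
    · exact purse_piNum hxy hxz hyz hxp hyp hzp h1p h2p h12 hnd H harcs' heven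
  constructor
  · -- part (i)
    intro H hpurse
    obtain ⟨x, y, z, y₁, y₂, p, hxy, hxz, hyz, hxp, hyp, hzp, hnd, hlen2, heven,
      h1p, h2p, hverts, harcs, hn, hm, hpi⟩ := fact H hpurse
    obtain ⟨t, ht⟩ := heven
    unfold Digraph'.potential
    rw [hn, hm, hpi]
    omega
  · -- part (ii)
    intro D hcrit hex
    obtain ⟨H, hsub, hpurse, hspan⟩ := hex
    obtain ⟨x, y, z, y₁, y₂, p, hxy, hxz, hyz, hxp, hyp, hzp, hnd, hlen2, heven,
      h1p, h2p, hverts, harcs, hn, hm, hpi⟩ := fact H hpurse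
    have hxD : x ∈ D.verts := by rw [← hspan, hverts]; simp
    have hzD : z ∈ D.verts := by rw [← hspan, hverts]; simp
    have hnot2 : ¬ D.Dicolourable 2 := by
      intro h
      have h2 : D.dichromatic ≤ 2 := Nat.sInf_le h
      rw [hcrit.1] at h2
      omega
    have outArc : ∀ v : V, v ∈ D.verts → ∃ w, (v, w) ∈ D.arcs ∧ w ≠ y := by
      intro v hv
      by_contra hcon
      push_neg at hcon
      have hprop : (D.delVert v).IsProperSubdigraph D := by
        refine ⟨⟨Finset.erase_subset _ _, Finset.filter_subset _ _⟩, Or.inl ?_⟩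
        show D.verts.erase v ≠ D.verts
        intro e
        have hne : v ∉ D.verts.erase v := Finset.notMem_erase _ _
        rw [e] at hne
        exact hne hv
      have hdel2 : (D.delVert v).dichromatic ≤ 2 := hcrit.2 _ hprop
      have hcol : (D.delVert v).Dicolourable 2 := dicolourable_of_dichromatic_le hdel2
      exact hnot2 (extend_colouring hcol hcon)
    obtain ⟨w₁, hw₁, hw₁y⟩ := outArc x hxD
    obtain ⟨w₂, hw₂, hw₂y⟩ := outArc z hzD
    have hxwH : (x, w₁) ∉ H.arcs := by
      intro h
      rw [harcs] at h
      exact hw₁y (purse_out_x hxp h hxy hxz h1p h2p)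
    have hzwH : (z, w₂) ∉ H.arcs := by
      intro h
      rw [harcs] at h
      exact hw₂y (purse_out_z hzp h hxz hyz h1p h2p)
    have hins : insert (x, w₁) (insert (z, w₂) H.arcs) ⊆ D.arcs := by
      intro a ha
      rcases Finset.mem_insert.mp ha with rfl | ha
      · exact hw₁
      rcases Finset.mem_insert.mp ha with rfl | ha
      · exact hw₂
      · exact hsub.2 ha
    have hcardins : (insert (x, w₁) (insert (z, w₂) H.arcs)).card = H.arcs.card + 2 := by
      rw [Finset.card_insert_of_notMem, Finset.card_insert_of_notMem hzwH]
      rw [Finset.mem_insert]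
      rintro (h | h)
      · exact hxz (congrArg Prod.fst h)
      · exact hxwH h
    have hDm : 2 * p.length + 8 ≤ D.m := by
      have hc := Finset.card_le_card hins
      rw [hcardins] at hc
      have hHm : H.arcs.card = 2 * p.length + 6 := hm
      show 2 * p.length + 8 ≤ D.arcs.card
      omega
    have hDn : D.n = p.length + 3 := by
      show D.verts.card = p.length + 3
      rw [← hspan, hverts]
      exact purse_verts_card hxy hxz hyz hxp hyp hzp hnd
    have hpiD : p.length / 2 ≤ D.piNum := by
      rw [← hpi]
      exact piNum_mono hsub
    obtain ⟨t, ht⟩ := heven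
    unfold Digraph'.potential
    rw [hDn]
    omega
end
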